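/- Let R be a (not necessarily commutative) ring of characteristic p, where p is a prime number, and let δ : R → R be an additive map satisfying the Leibniz rule δ(x·y) = δ(x)·y + x·δ(y) for all x, y ∈ R. Let a ∈ R and define ad_a : R → R by ad_a(x) = a·x − x·a. If (ad_a)^D (δ a) = 0 for some natural number D with D ≤ p − 1, then δ(a^p) = 0. -/

import Mathlib

open Finset

lemma ad_iter_sum {R : Type*} [Ring R] (a x : R) (n : ℕ) :
    (fun y : R => a * y - y * a)^[n] x
      = ∑ m ∈ range (n+1), ((-1:ℤ)^(n-m) * (n.choose m)) • (a^m * x * a^(n-m)) := by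
  set L : AddMonoid.End R := AddMonoidHom.mulLeft a with hLdef
  set Rr : AddMonoid.End R := AddMonoidHom.mulRight a with hRdef
  have hLapp : ∀ y : R, L y = a * y := fun y => rfl
  have hRapp : ∀ y : R, Rr y = y * a := fun y => rfl
  have hNegapp : ∀ y : R, (-Rr) y = -(y * a) := fun y => rfl
  have hLpow : ∀ (m : ℕ) (y : R), (L^m) y = a^m * y := by
    intro m; induction m with
    | zero => intro y; simp
    | succ k ih =>
      intro y
      rw [pow_succ, AddMonoid.End.coe_mul, Function.comp_apply, ih, hLapp, ← mul_assoc,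
        ← pow_succ]
  have hNRpow : ∀ (k : ℕ) (y : R), ((-Rr)^k) y = ((-1:ℤ)^k) • (y * a^k) := by
    intro k; induction k with
    | zero => intro y; simp
    | succ k ih =>
      intro y
      rw [pow_succ, AddMonoid.End.coe_mul, Function.comp_apply, hNegapp, map_neg, ih, pow_succ, mul_smul, neg_one_zsmul, ← smul_neg]
      congr 1
      rw [mul_assoc, ← pow_succ']
  have hcomm : Commute L (-Rr) := by
    show L * -Rr = -Rr * L
    refine AddMonoidHom.ext fun y => ?_
    show L ((-Rr) y) = (-Rr) (L y)
    simp only [hNegapp, map_neg, hLapp, hRapp, mul_assoc, mul_neg]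
  have hiter : ∀ (k : ℕ) (y : R), (fun y : R => a * y - y * a)^[k] y = ((L + -Rr)^k) y := by
    intro k; induction k with
    | zero => intro y; simp
    | succ k ih =>
      intro y
      rw [Function.iterate_succ_apply', pow_succ', AddMonoid.End.coe_mul,
        Function.comp_apply, ← ih]
      show _ = (L + -Rr) _
      show _ = L _ + (-Rr) _; rw [hNegapp, hLapp, sub_eq_add_neg]
  rw [hiter, hcomm.add_pow]; erw [AddMonoidHom.finset_sum_apply]
  refine Finset.sum_congr rfl fun m hm => ?_
  show (L ^ m) (((-Rr) ^ (n - m)) ((n.choose m : AddMonoid.End R) x)) = _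
  rw [AddMonoid.End.natCast_apply, map_nsmul, hNRpow, map_nsmul, map_zsmul, hLpow,
    ← mul_assoc, mul_smul, natCast_zsmul]
  rw [smul_comm]

lemma choose_pred_zmod (p : ℕ) (hp : p.Prime) : ∀ m, m ≤ p - 1 →
    (((p-1).choose m : ZMod p)) = (-1)^m := by
  intro m
  induction m with
  | zero => intro _; simp
  | succ k ih =>
    intro hk1
    have hk : k ≤ p - 1 := Nat.le_of_succ_le hk1
    have hkp : k + 1 < p := by omega
    have hpascal : (p - 1).choose k + (p - 1).choose (k+1) = p.choose (k+1) := by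
      have h := Nat.choose_succ_succ (p-1) k
      have hpe : (p - 1).succ = p := Nat.succ_pred_eq_of_pos hp.pos
      rw [hpe] at h
      simp only [Nat.succ_eq_add_one] at h
      omega
    have hz : (p.choose (k+1) : ZMod p) = 0 :=
      (ZMod.natCast_eq_zero_iff _ _).mpr
        (hp.dvd_choose_self (Nat.succ_ne_zero k) hkp)
    have : ((p-1).choose k : ZMod p) + ((p-1).choose (k+1) : ZMod p) = 0 := by
      rw [← Nat.cast_add, hpascal, hz]
    rw [ih hk] at this
    have h2 : ((p-1).choose (k+1) : ZMod p) = -(-1)^k := by linear_combination this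
    rw [h2, pow_succ]
    ring

lemma neg_one_pow_pred (p : ℕ) (hp : p.Prime) : ((-1 : ZMod p))^(p-1) = 1 := by
  rcases hp.eq_two_or_odd' with h2 | hodd
  · subst h2; decide
  · exact (Nat.Odd.sub_odd hodd odd_one).neg_one_pow

theorem derivation_pth_power_vanishes {R : Type*} [Ring R] (p : ℕ) (hp : p.Prime)
    [CharP R p] (δ : R → R)
    (hadd : ∀ x y : R, δ (x + y) = δ x + δ y)
    (hleib : ∀ x y : R, δ (x * y) = δ x * y + x * δ y)
    (a : R) (D : ℕ) (hD : D ≤ p - 1)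
    (h : (fun x : R => a * x - x * a)^[D] (δ a) = 0) :
    δ (a ^ p) = 0 := by
  have hδ1 : δ (1 : R) = 0 := by
    have h1 := hleib 1 1
    simp only [mul_one, one_mul] at h1
    exact left_eq_add.mp h1
  -- power rule
  have hpow : ∀ n : ℕ, δ (a ^ n) = ∑ m ∈ range n, a ^ m * δ a * a ^ (n - 1 - m) := by
    intro n
    induction n with
    | zero => simpa using hδ1
    | succ n ih =>
      rw [pow_succ', hleib, ih, Finset.mul_sum, Finset.sum_range_succ', add_comm]
      congr 1
      · refine Finset.sum_congr rfl fun i hi => ?_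
        have h1 : n + 1 - 1 - (i + 1) = n - 1 - i := by omega
        have h2 : n - (i + 1) = n - 1 - i := by omega
        simp [h1, h2, pow_succ', mul_assoc]
      · simp
  -- iterate vanishes at p - 1
  have hfix : (fun x : R => a * x - x * a)^[p - 1] (δ a) = 0 := by
    obtain ⟨k, hk⟩ : ∃ k, p - 1 = k + D := ⟨p - 1 - D, by omega⟩
    rw [hk, Function.iterate_add_apply, h]
    exact Function.iterate_fixed (by simp) k
  have hsum : ∑ m ∈ range p,
      ((-1:ℤ)^(p-1-m) * ((p-1).choose m)) • (a^m * δ a * a^(p-1-m)) = 0 := by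
    have := ad_iter_sum a (δ a) (p - 1)
    rw [hfix] at this
    have hp1 : p - 1 + 1 = p := by have := hp.pos; omega
    rw [hp1] at this
    exact this.symm
  rw [hpow p, ← hsum]
  refine Finset.sum_congr rfl fun m hm => ?_
  rw [Finset.mem_range] at hm
  set c : ℤ := (-1:ℤ)^(p-1-m) * ((p-1).choose m) with hc
  have hm' : m ≤ p - 1 := by omega
  have hdvd : (p : ℤ) ∣ c - 1 := by
    rw [← ZMod.intCast_zmod_eq_zero_iff_dvd, hc]
    push_cast
    rw [choose_pred_zmod p hp m hm', ← pow_add, Nat.sub_add_cancel hm',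
      neg_one_pow_pred p hp, sub_self]
  have hcR : ((c : ℤ) : R) = 1 := by
    have h0 : ((c - 1 : ℤ) : R) = 0 := (CharP.intCast_eq_zero_iff R p _).mpr hdvd
    push_cast at h0
    exact sub_eq_zero.mp h0
  rw [zsmul_eq_mul, hcR, one_mul]
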